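/- arXiv:0812.1584 — 2 statements merged into one kernel-verified Lean document; each statement's English description precedes it below -/
import Mathlib

section
/- Let g be a semisimple Lie algebra over an algebraically closed field of characteristic 0, (e,h,f) an sl2-triple, χ = (e,·), l ⊆ g(−1) a Lagrangian subspace for ω_χ, and m = l ⊕ ⊕_{i≤−2} g(i). Then m is a nilpotent Lie subalgebra of g and χ restricts to a character of m, i.e., χ([m,m]) = 0. -/
open LieAlgebra Module

section Aux

variable {K g : Type*} [Field K] [CharZero K]
  [LieRing g] [LieAlgebra K g] [FiniteDimensional K g]

/-- The sum of integer eigenspaces of `ad h` with eigenvalue `≤ n`. -/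
def Pspace (h : g) (n : ℤ) : Submodule K g :=
  ⨆ i : ℤ, ⨆ _ : i ≤ n, Module.End.eigenspace (ad K g h) (i : K)

lemma eig_le_Pspace (h : g) {i n : ℤ} (hi : i ≤ n) :
    Module.End.eigenspace (ad K g h) (i : K) ≤ Pspace (K := K) h n :=
  le_iSup₂ (f := fun (i : ℤ) (_ : i ≤ n) =>
    Module.End.eigenspace (ad K g h) (i : K)) i hi

lemma Pspace_mono (h : g) {a b : ℤ} (hab : a ≤ b) :
    Pspace (K := K) h a ≤ Pspace (K := K) h b :=
  iSup₂_le fun i hi => eig_le_Pspace h (hi.trans hab)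

lemma lie_eig {h x y : g} {μ ν : K}
    (hx : x ∈ Module.End.eigenspace (ad K g h) μ)
    (hy : y ∈ Module.End.eigenspace (ad K g h) ν) :
    ⁅x, y⁆ ∈ Module.End.eigenspace (ad K g h) (μ + ν) := by
  rw [Module.End.mem_eigenspace_iff] at hx hy ⊢
  rw [ad_apply] at hx hy ⊢
  rw [leibniz_lie, hx, hy, smul_lie, lie_smul, add_smul]

lemma lie_mem_Pspace_of_eig {h x : g} {μ n : ℤ}
    (hx : x ∈ Module.End.eigenspace (ad K g h) (μ : K)) {y : g}
    (hy : y ∈ Pspace (K := K) h n) :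
    ⁅x, y⁆ ∈ Pspace (K := K) h (μ + n) := by
  have hle : Pspace (K := K) h n ≤
      (Pspace (K := K) h (μ + n)).comap (ad K g x) := by
    refine iSup₂_le fun i hi z hz => ?_
    rw [Submodule.mem_comap, ad_apply]
    have := lie_eig (K := K) hx hz
    rw [← Int.cast_add] at this
    exact eig_le_Pspace h (by omega) this
  simpa [ad_apply] using hle hy

lemma lie_mem_Pspace {h x y : g} {a b : ℤ}
    (hx : x ∈ Pspace (K := K) h a) (hy : y ∈ Pspace (K := K) h b) :
    ⁅x, y⁆ ∈ Pspace (K := K) h (a + b) := by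
  have hle : Pspace (K := K) h a ≤
      (Pspace (K := K) h (a + b)).comap (-(ad K g y)) := by
    refine iSup₂_le fun i hi z hz => ?_
    rw [Submodule.mem_comap]
    have h1 : (-(ad K g y)) z = ⁅z, y⁆ := by
      rw [LinearMap.neg_apply, ad_apply, lie_skew]
    rw [h1]
    exact Pspace_mono h (by omega) (lie_mem_Pspace_of_eig hz hy)
  have := hle hx
  rw [Submodule.mem_comap] at this
  have h1 : (-(ad K g y)) x = ⁅x, y⁆ := by
    rw [LinearMap.neg_apply, ad_apply, lie_skew]
  rwa [h1] at this

lemma Pspace_eq_bot (h : g) : ∃ N : ℤ, ∀ n : ℤ, n ≤ N → Pspace (K := K) h n = ⊥ := by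
  have hfin : {i : ℤ | Module.End.eigenspace (ad K g h) (i : K) ≠ ⊥}.Finite := by
    have h2 : {i : ℤ | Module.End.eigenspace (ad K g h) (i : K) ≠ ⊥} ⊆
        (fun i : ℤ => (i : K)) ⁻¹' {μ | (ad K g h).HasEigenvalue μ} := by
      intro i hi
      exact hi
    exact Set.Finite.subset
      ((Module.End.finite_hasEigenvalue (ad K g h)).preimage
        (Int.cast_injective.injOn)) h2
  obtain ⟨N, hN⟩ := hfin.bddBelow
  refine ⟨N - 1, fun n hn => ?_⟩
  rw [eq_bot_iff]
  refine iSup₂_le fun i hi => ?_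
  by_cases hib : Module.End.eigenspace (ad K g h) (i : K) = ⊥
  · rw [hib]
  · have := hN hib
    omega

end Aux

/-- With `(e,h,f)` an `sl₂`-triple in a semisimple Lie algebra `g` over an
algebraically closed field of characteristic `0`, `χ = B(e,·)`, and `l ⊆ g(-1)` Lagrangian
for `ω_χ`, the subspace `m = l ⊕ ⊕_{i ≤ -2} g(i)` is a nilpotent Lie subalgebra of `g` and
`χ` vanishes on `[m, m]`, i.e. `χ` restricts to a character of `m`. -/
theorem m_nilpotent_subalgebra_and_chi_character
    {K g : Type*} [Field K] [IsAlgClosed K] [CharZero K]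
    [LieRing g] [LieAlgebra K g] [FiniteDimensional K g]
    [LieAlgebra.IsSemisimple K g]
    (e h f : g) (ht : IsSl2Triple h e f)
    (B : g →ₗ[K] g →ₗ[K] K)
    (hsymm : ∀ x y : g, B x y = B y x)
    (hBnondeg : ∀ x : g, (∀ y : g, B x y = 0) → x = 0)
    (hinv : ∀ x y z : g, B ⁅x, y⁆ z = B x ⁅y, z⁆)
    (l : Submodule K g)
    (hl : l ≤ Module.End.eigenspace (ad K g h) (-1 : K))
    (hiso : ∀ ξ ∈ l, ∀ η ∈ l, B e ⁅ξ, η⁆ = 0)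
    (hlag : 2 * Module.finrank K l
        = Module.finrank K (Module.End.eigenspace (ad K g h) (-1 : K)))
    (m : Submodule K g)
    (hm : m = l ⊔ ⨆ i : ℤ, ⨆ _ : i ≤ -2, Module.End.eigenspace (ad K g h) (i : K)) :
    (∀ x ∈ m, ∀ y ∈ m, ⁅x, y⁆ ∈ m) ∧
    (∃ n : ℕ, ∀ xs : List g, (∀ a ∈ xs, a ∈ m) → xs.length = n →
        ∀ y ∈ m, xs.foldr (fun a b => ⁅a, b⁆) y = 0) ∧
    (∀ x ∈ m, ∀ y ∈ m, B e ⁅x, y⁆ = 0) := by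
  -- `l` lies in the integer `-1` eigenspace
  have hl' : l ≤ Module.End.eigenspace (ad K g h) (((-1 : ℤ) : K)) := by
    intro x hx
    have := hl hx
    norm_num at this ⊢
    exact this
  have hm' : m = l ⊔ Pspace (K := K) h (-2) := hm
  have hmP : m ≤ Pspace (K := K) h (-1) := by
    rw [hm']
    refine sup_le (le_trans hl' (eig_le_Pspace h (by omega))) (Pspace_mono h (by omega))
  have hPm : Pspace (K := K) h (-2) ≤ m := hm' ▸ le_sup_right
  -- χ vanishes on eigenspaces with eigenvalue ≠ -2
  have hA : ∀ (i : ℤ), i ≠ -2 → ∀ z ∈ Module.End.eigenspace (ad K g h) (i : K),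
      B e z = 0 := by
    intro i hi z hz
    rw [Module.End.mem_eigenspace_iff, ad_apply] at hz
    have heq : B ⁅e, h⁆ z = B e ⁅h, z⁆ := hinv e h z
    have heh : ⁅e, h⁆ = -(2 • e : g) := by
      rw [← lie_skew, ht.lie_h_e_nsmul]
    rw [heh, hz] at heq
    have h2 : (2 • e : g) = e + e := two_smul ℕ e
    rw [h2] at heq
    simp only [map_neg, map_add, LinearMap.neg_apply, LinearMap.add_apply, map_smul,
      smul_eq_mul] at heq
    have hne : (i : K) ≠ -2 := by
      intro hc
      apply hi
      apply Int.cast_injective (α := K)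
      rw [hc]
      push_cast
      ring
    have hcast : ((i : K) + 2) ≠ 0 := fun hc => hne (by linear_combination hc)
    have hz0 : ((i : K) + 2) * B e z = 0 := by linear_combination -heq
    exact (mul_eq_zero.mp hz0).resolve_left hcast
  -- χ vanishes on Pspace h (-3)
  have hχP : ∀ z ∈ Pspace (K := K) h (-3), B e z = 0 := by
    intro z hz
    have hle : Pspace (K := K) h (-3) ≤ LinearMap.ker (B e) :=
      iSup₂_le fun i hi w hw => LinearMap.mem_ker.mpr (hA i (by omega) w hw)
    exact LinearMap.mem_ker.mp (hle hz)
  refine ⟨?_, ?_, ?_⟩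
  · -- closure under bracket
    intro x hx y hy
    have := lie_mem_Pspace (K := K) (hmP hx) (hmP hy)
    exact hPm (by norm_num at this ⊢; exact this)
  · -- nilpotency
    obtain ⟨N, hN⟩ := Pspace_eq_bot (K := K) h
    refine ⟨(-1 - N).toNat + 1, fun xs hxs hlen y hy => ?_⟩
    have key : ∀ (xs : List g), (∀ a ∈ xs, a ∈ m) → ∀ (k : ℤ) (y : g),
        y ∈ Pspace (K := K) h k →
        xs.foldr (fun a b => ⁅a, b⁆) y ∈ Pspace (K := K) h (k - xs.length) := by
      intro xs
      induction xs with
      | nil => intro _ k y hy; simpa using hy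
      | cons a t ih =>
          intro hmem k y hy
          have ht' := ih (fun b hb => hmem b (List.mem_cons_of_mem a hb)) k y hy
          have ha : a ∈ Pspace (K := K) h (-1) := hmP (hmem a (List.mem_cons_self))
          have := lie_mem_Pspace (K := K) ha ht'
          simp only [List.foldr_cons, List.length_cons]
          have hcast : (-1 : ℤ) + (k - t.length) = k - (t.length + 1 : ℕ) := by
            push_cast; ring
          rwa [hcast] at this
    have hfold := key xs hxs (-1) y (hmP hy)
    rw [hlen] at hfold
    have hbot : Pspace (K := K) h (-1 - ((-1 - N).toNat + 1 : ℕ)) = ⊥ :=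
      hN _ (by push_cast; omega)
    rw [hbot] at hfold
    simpa using hfold
  · -- χ vanishes on [m, m]
    intro x hx y hy
    rw [hm'] at hx hy
    obtain ⟨a, ha, b, hb, rfl⟩ := Submodule.mem_sup.mp hx
    obtain ⟨c, hc, d, hd, rfl⟩ := Submodule.mem_sup.mp hy
    have hya : a ∈ Pspace (K := K) h (-1) := eig_le_Pspace h (by omega) (hl' ha)
    have hyc : c ∈ Pspace (K := K) h (-1) := eig_le_Pspace h (by omega) (hl' hc)
    have h1 : B e ⁅a, c⁆ = 0 := hiso a ha c hc
    have h2 : B e ⁅a, d⁆ = 0 := by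
      have := lie_mem_Pspace_of_eig (K := K) (μ := -1) (hl' ha) hd
      exact hχP _ (by norm_num at this ⊢; exact this)
    have h3 : B e ⁅b, c⁆ = 0 := by
      have := lie_mem_Pspace (K := K) hb hyc
      exact hχP _ (by norm_num at this ⊢; exact this)
    have h4 : B e ⁅b, d⁆ = 0 := by
      have := lie_mem_Pspace (K := K) hb hd
      exact hχP _ ((Pspace_mono h (by omega)) this)
    rw [add_lie, lie_add, lie_add, map_add, map_add, map_add, h1, h2, h3, h4]
    ring
end

section
/- Let (e,h,f) be an sl2-triple in a semisimple Lie algebra g over an algebraically closed field of characteristic 0, and let V = [g,f] with form ω(ξ,η) = χ([ξ,η]) where χ = (e,·). Then ω is a nondegenerate skew-symmetric form on V. -/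
open Polynomial Module

section Aux
variable {K M : Type*} [Field K] [AddCommGroup M] [Module K M]

lemma aux_pow_inj {A : Module.End K M} (hA : Function.Injective A) (n : ℕ) :
    Function.Injective (A ^ n : Module.End K M) := by
  induction n with
  | zero => exact fun a b hab => hab
  | succ n ih =>
    rw [pow_succ]
    intro a b hab
    simp only [Module.End.mul_apply] at hab
    exact hA (ih hab)

lemma aux_shift {E H : Module.End K M} (hHE : H * E = E * H + (2:K) • E) (c : K) (m : ℕ) :
    ((H - (c + 2) • 1) ^ m) * E = E * ((H - c • 1) ^ m) := by
  have h1 : (H - (c + 2) • 1) * E = E * (H - c • 1) := by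
    rw [sub_mul, mul_sub, hHE, smul_mul_assoc, mul_smul_comm, one_mul, mul_one]
    module
  induction m with
  | zero => simp
  | succ m ih =>
    rw [pow_succ, pow_succ, mul_assoc, h1, ← mul_assoc, ih, mul_assoc]

lemma aux_eig_pow {A : Module.End K M} {y : M} {t : K} (hy : A y = t • y) (k : ℕ) :
    (A ^ k) y = t ^ k • y := by
  induction k with
  | zero => simp
  | succ k ih =>
    rw [pow_succ, Module.End.mul_apply, hy, map_smul, ih, smul_smul, ← pow_succ']

lemma aux_HE_pow {E H : Module.End K M} (hHE : H * E = E * H + (2:K) • E) (j : ℕ) :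
    H * E ^ j = E ^ j * H + ((2 * j : ℕ) : K) • E ^ j := by
  induction j with
  | zero => simp
  | succ j ih =>
    rw [pow_succ, ← mul_assoc, ih, add_mul, smul_mul_assoc, mul_assoc, hHE]
    rw [mul_add, ← mul_assoc, ← pow_succ, mul_smul_comm, ← pow_succ]
    push_cast
    module

lemma aux_comm {E F H : Module.End K M} (hHE : H * E = E * H + (2:K) • E)
    (hFE : F * E = E * F - H) (j : ℕ) :
    F * E ^ (j + 1) = E ^ (j + 1) * F - ((j + 1 : ℕ) : K) • (E ^ j * H)
      - (((j + 1) * j : ℕ) : K) • E ^ j := by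
  induction j with
  | zero => simpa using hFE
  | succ j ih =>
    have step : F * E ^ (j + 2) = (F * E ^ (j + 1)) * E := by
      rw [mul_assoc, ← pow_succ]
    rw [step, ih, sub_mul, sub_mul, mul_assoc, hFE, smul_mul_assoc, smul_mul_assoc,
      mul_assoc, hHE]
    simp only [mul_sub, mul_add, mul_smul_comm, smul_mul_assoc, ← mul_assoc, ← pow_succ]
    push_cast
    module

end Aux

/-- Core sl₂ lemma: if `x` lies in a generalized eigenspace of `H` with eigenvalue `lam`,
`v = F x` is nonzero and `E v = 0`, then `lam = 1 - N` for some `N ≥ 1`. -/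
lemma sl2_core {K M : Type*} [Field K] [CharZero K] [AddCommGroup M] [Module K M]
    [FiniteDimensional K M] (E F H : Module.End K M)
    (hHE : H * E = E * H + (2:K) • E) (hFE : F * E = E * F - H)
    {x v : M} {lam : K} {k : ℕ}
    (hx : ((H - lam • 1) ^ k) x = 0) (hFx : F x = v) (hv : v ≠ 0) (hEv : E v = 0) :
    ∃ N : ℕ, 1 ≤ N ∧ lam = 1 - (N : K) := by
  have hx0 : x ≠ 0 := by rintro rfl; rw [map_zero] at hFx; exact hv hFx.symm
  have hk : k ≠ 0 := by rintro rfl; simp only [pow_zero, Module.End.one_apply] at hx; exact hx0 hx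
  -- generalized eigenvector chain
  have genj : ∀ j : ℕ, ((H - (lam + 2 * j) • 1) ^ k) ((E ^ j) x) = 0 := by
    intro j
    induction j with
    | zero => simpa using hx
    | succ j ih =>
      have hsh := aux_shift hHE (lam + 2 * j) k
      have happ := congrArg (fun T : Module.End K M => T ((E ^ j) x)) hsh
      simp only [Module.End.mul_apply] at happ
      have h2 : (lam + 2 * ((j : ℕ) + 1 : ℕ) : K) = (lam + 2 * j) + 2 := by push_cast; ring
      rw [h2]
      calc ((H - ((lam + 2 * j) + 2) • 1) ^ k) ((E ^ (j + 1)) x)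
          = ((H - ((lam + 2 * j) + 2) • 1) ^ k) (E ((E ^ j) x)) := by
            rw [pow_succ', Module.End.mul_apply]
        _ = E (((H - (lam + 2 * j) • 1) ^ k) ((E ^ j) x)) := happ
        _ = 0 := by rw [ih, map_zero]
  -- each nonzero element of the chain gives an eigenvalue of H
  have hasEig : ∀ j : ℕ, (E ^ j) x ≠ 0 → H.HasEigenvalue (lam + 2 * j) := by
    intro j hj
    rw [Module.End.hasEigenvalue_iff]
    intro hbot
    rw [Module.End.eigenspace_def, LinearMap.ker_eq_bot] at hbot
    exact hj (aux_pow_inj hbot k (by simpa using genj j))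
  -- the chain must die
  have hex : ∃ j : ℕ, (E ^ j) x = 0 := by
    by_contra hc
    push_neg at hc
    have hinj : Function.Injective (fun j : ℕ => lam + 2 * (j : K)) := by
      intro i j hij
      field_simp at hij
      have h' : 2 * i = 2 * j := by exact_mod_cast add_left_cancel hij
      omega
    exact (Set.infinite_of_injective_forall_mem hinj
      (fun j : ℕ => hasEig j (hc j))) H.finite_hasEigenvalue
  -- minimal vanishing index
  classical
  set N := Nat.find hex with hNdef
  have hN : (E ^ N) x = 0 := Nat.find_spec hex
  have hN0 : N ≠ 0 := by
    intro hcon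
    rw [hcon, pow_zero] at hN
    exact hx0 hN
  obtain ⟨P, hP⟩ : ∃ P, N = P + 1 := ⟨N - 1, (Nat.succ_pred_eq_of_pos (Nat.pos_of_ne_zero hN0)).symm⟩
  have hy0 : (E ^ P) x ≠ 0 := Nat.find_min hex (by omega)
  -- apply the commutator identity at exponent N = P + 1
  have hcm := congrArg (fun T : Module.End K M => T x) (aux_comm hHE hFE P)
  simp only [Module.End.mul_apply, LinearMap.sub_apply, LinearMap.smul_apply] at hcm
  rw [← hP, hN, map_zero, hFx] at hcm
  have hEPv : (E ^ (P + 1)) v = 0 := by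
    rw [pow_succ, Module.End.mul_apply, hEv, map_zero]
  rw [hP, hEPv] at hcm
  have h2 : ((P + 1 : ℕ) : K) ≠ 0 := Nat.cast_ne_zero.mpr (Nat.succ_ne_zero P)
  have hEPHx : (E ^ P) (H x) = -(P : K) • ((E ^ P) x) := by
    have h1 : ((P + 1 : ℕ) : K) • ((E ^ P) (H x))
        = ((P + 1 : ℕ) : K) • (-(P : K) • ((E ^ P) x)) := by
      push_cast at hcm ⊢
      linear_combination (norm := module) hcm
    exact smul_right_injective M h2 h1
  -- compute H ((E^P) x)
  have hHy : H ((E ^ P) x) = (P : K) • ((E ^ P) x) := by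
    have h3 := congrArg (fun T : Module.End K M => T x) (aux_HE_pow hHE P)
    simp only [Module.End.mul_apply, LinearMap.add_apply, LinearMap.smul_apply] at h3
    rw [h3, hEPHx]
    push_cast
    module
  -- (E^P) x lies in the generalized eigenspace for lam + 2P, and is an eigenvector for P
  have hgen := genj P
  have heig : (H - (lam + 2 * P) • 1) ((E ^ P) x)
      = ((P : K) - (lam + 2 * P)) • ((E ^ P) x) := by
    simp only [LinearMap.sub_apply, LinearMap.smul_apply, Module.End.one_apply, hHy]
    module
  rw [aux_eig_pow heig k] at hgen
  rcases smul_eq_zero.mp hgen with hz | hz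
  · have hz' : (P : K) - (lam + 2 * P) = 0 := pow_eq_zero_iff hk |>.mp hz
    refine ⟨P + 1, by omega, ?_⟩
    push_cast
    linear_combination -hz'
  · exact absurd hz hy0


/-- `F` intertwines `aeval H` and `aeval (H + 2)` when `F * H = (H + 2) * F`. -/
lemma aux_intertwine {K M : Type*} [Field K] [AddCommGroup M] [Module K M]
    {F H : Module.End K M} (hc : F * H = (H + (2:K) • 1) * F) (r : K[X]) :
    F * aeval H r = aeval (H + (2:K) • 1) r * F := by
  induction r using Polynomial.induction_on' with
  | add p q hp hq => simp only [map_add, mul_add, add_mul, hp, hq]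
  | monomial n a =>
    have hpow : ∀ m : ℕ, F * H ^ m = (H + (2:K) • 1) ^ m * F := by
      intro m
      induction m with
      | zero => simp
      | succ m ih => rw [pow_succ, ← mul_assoc, ih, mul_assoc, hc, ← mul_assoc, ← pow_succ]
    simp only [aeval_monomial]
    rw [← mul_assoc, (Algebra.commutes a F).symm, mul_assoc, hpow, ← mul_assoc]

/-- Extraction: an eigenvector of `H` in the range of `F` is the image of a generalized
eigenvector with shifted eigenvalue. -/
lemma aux_extract {K M : Type*} [Field K] [IsAlgClosed K] [AddCommGroup M] [Module K M]
    [FiniteDimensional K M] (H F : Module.End K M)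
    (hc : F * H = (H + (2:K) • 1) * F) {v : M} {μ : K}
    (hv : H v = μ • v) (hv0 : v ≠ 0) (hvr : v ∈ LinearMap.range F) :
    ∃ (k : ℕ) (x : M), ((H - (μ + 2) • 1) ^ k) x = 0 ∧ F x = v := by
  classical
  obtain ⟨x₀, hx₀⟩ := hvr
  set p := minpoly K H with hpdef
  have hint : IsIntegral K H := Algebra.IsIntegral.isIntegral (R := K) H
  have hmon : p.Monic := minpoly.monic hint
  have hsplit : Splits p := IsAlgClosed.splits p
  have hfact : p = (p.roots.map fun a => X - C a).prod :=
    hsplit.eq_prod_roots_of_monic hmon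
  set a := μ + 2 with hadef
  set q : K[X] := ((p.roots.filter (· ≠ a)).map fun r => X - C r).prod with hqdef
  have hsum : p.roots = p.roots.filter (· = a) + p.roots.filter (fun x => ¬ x = a) :=
    (Multiset.filter_add_not _ _).symm
  set k := (p.roots.filter (fun x => x = a)).card with hkdef
  have hps : p = (X - C a) ^ k * q := by
    conv_lhs => rw [hfact, hsum]
    rw [Multiset.map_add, Multiset.prod_add]
    congr 1
    · rw [Multiset.map_congr (g := fun _ : K => X - C a) rfl
        (fun x hx => by rw [(Multiset.mem_filter.mp hx).2]),
        Multiset.map_const', Multiset.prod_replicate]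
  -- apply to x₀
  have hz : ((H - a • 1) ^ (k)) ((aeval H q) x₀) = 0 := by
    have h0 : aeval H p = 0 := minpoly.aeval K H
    have : aeval H ((X - C a) ^ (k) * q) = 0 := by rw [← hps]; exact h0
    rw [map_mul, map_pow] at this
    have hXa : aeval H (X - C a) = H - a • 1 := by
      simp [Algebra.algebraMap_eq_smul_one]
    rw [hXa] at this
    calc ((H - a • 1) ^ (k)) ((aeval H q) x₀)
        = ((H - a • 1) ^ (k) * aeval H q) x₀ := rfl
      _ = 0 := by rw [this]; rfl
  -- compute F (aeval H q x₀)
  have hFq : F ((aeval H q) x₀) = q.eval a • v := by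
    have h1 := congrArg (fun T : Module.End K M => T x₀) (aux_intertwine hc q)
    simp only [Module.End.mul_apply] at h1
    rw [h1, hx₀]
    have hev : (H + (2:K) • 1).HasEigenvector a v := by
      refine ⟨Module.End.mem_eigenspace_iff.mpr ?_, hv0⟩
      simp [hv, hadef, add_smul]
    exact Module.End.aeval_apply_of_hasEigenvector hev
  have hq0 : q.eval a ≠ 0 := by
    rw [hqdef, eval_multiset_prod]
    apply Multiset.prod_ne_zero
    intro hmem
    rw [Multiset.mem_map] at hmem
    obtain ⟨r, hr, hr0⟩ := hmem
    rw [Multiset.mem_map] at hr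
    obtain ⟨r', hr', rfl⟩ := hr
    rw [Multiset.mem_filter] at hr'
    simp only [eval_sub, eval_X, eval_C] at hr0
    exact hr'.2 (sub_eq_zero.mp hr0).symm
  refine ⟨k, (q.eval a)⁻¹ • ((aeval H q) x₀), ?_, ?_⟩
  · rw [map_smul, hz, smul_zero]
  · rw [map_smul, hFq, smul_smul, inv_mul_cancel₀ hq0, one_smul]


open LieAlgebra

/-- Let `(e,h,f)` be an `sl₂`-triple in a semisimple Lie algebra `g` over an
algebraically closed field of characteristic `0`, `B` an invariant nondegenerate symmetric
form, `χ = B(e,·)` and `V = [g,f] = im (ad f)`.  Then `ω(ξ,η) = χ([ξ,η])` is a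
nondegenerate skew-symmetric form on `V`. -/
theorem omega_symplectic_on_ad_f_range
    {K g : Type*} [Field K] [IsAlgClosed K] [CharZero K]
    [LieRing g] [LieAlgebra K g] [FiniteDimensional K g]
    [LieAlgebra.IsSemisimple K g]
    (e h f : g) (ht : IsSl2Triple h e f)
    (B : g →ₗ[K] g →ₗ[K] K)
    (hsymm : ∀ x y : g, B x y = B y x)
    (hBnondeg : ∀ x : g, (∀ y : g, B x y = 0) → x = 0)
    (hinv : ∀ x y z : g, B ⁅x, y⁆ z = B x ⁅y, z⁆)
    (V : Submodule K g) (hV : V = LinearMap.range ((ad K g f : g →ₗ[K] g))) :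
    (∀ ξ ∈ V, ∀ η ∈ V, B e ⁅ξ, η⁆ = - B e ⁅η, ξ⁆) ∧
    (∀ ξ ∈ V, (∀ η ∈ V, B e ⁅ξ, η⁆ = 0) → ξ = 0) := by
  constructor
  · intro ξ _ η _
    rw [← lie_skew ξ η, map_neg]
  · intro ξ hξV hortho
    by_contra hξ0
    set E : Module.End K g := ad K g e with hEdef
    set F : Module.End K g := ad K g f with hFdef
    set H : Module.End K g := ad K g h with hHdef
    -- the basic operator relations
    have hHE : H * E = E * H + (2:K) • E := by
      ext z
      have h1 : ⁅(⁅h, e⁆ : g), z⁆ = ⁅h, ⁅e, z⁆⁆ - ⁅e, ⁅h, z⁆⁆ := lie_lie h e z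
      rw [ht.lie_h_e_nsmul, two_nsmul, add_lie] at h1
      simp only [Module.End.mul_apply, LinearMap.add_apply, LinearMap.smul_apply,
        hEdef, hHdef, ad_apply]
      rw [two_smul, h1]
      abel
    have hHF : H * F = F * H - (2:K) • F := by
      ext z
      have h1 : ⁅(⁅h, f⁆ : g), z⁆ = ⁅h, ⁅f, z⁆⁆ - ⁅f, ⁅h, z⁆⁆ := lie_lie h f z
      rw [ht.lie_h_f_nsmul, neg_lie, two_nsmul, add_lie] at h1
      simp only [Module.End.mul_apply, LinearMap.sub_apply, LinearMap.smul_apply,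
        hFdef, hHdef, ad_apply]
      rw [two_smul, ← sub_eq_zero]
      rw [← sub_eq_zero] at h1
      linear_combination (norm := abel) -h1
    have hEF : E * F = F * E + H := by
      ext z
      have h1 : ⁅(⁅e, f⁆ : g), z⁆ = ⁅e, ⁅f, z⁆⁆ - ⁅f, ⁅e, z⁆⁆ := lie_lie e f z
      rw [ht.lie_e_f] at h1
      simp only [Module.End.mul_apply, LinearMap.add_apply, hEdef, hFdef, hHdef, ad_apply]
      rw [h1]
      abel
    have hFE : F * E = E * F - H := by rw [hEF]; exact (add_sub_cancel_right _ _).symm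
    have hFH : F * H = H * F + (2:K) • F := by rw [hHF]; module
    have hEH : E * H = H * E - (2:K) • E := by rw [hHE]; module
    have hcF : F * H = (H + (2:K) • 1) * F := by
      rw [hFH, add_mul, smul_mul_assoc, one_mul]
    have hcomm : (F * E) * H = H * (F * E) := by
      rw [mul_assoc, hEH, mul_sub, mul_smul_comm, ← mul_assoc, hFH, add_mul, smul_mul_assoc]
      simp only [mul_assoc]
      module
    -- step 1 : `F (E ξ) = 0`
    have hstep : ∀ y : g, B ⁅⁅e, ξ⁆, f⁆ y = 0 := by
      intro y
      have h1 : (⁅f, y⁆ : g) ∈ V := by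
        rw [hV]; exact ⟨y, by rw [ad_apply]⟩
      calc B ⁅⁅e, ξ⁆, f⁆ y = B ⁅e, ξ⁆ ⁅f, y⁆ := hinv _ _ _
        _ = B e ⁅ξ, ⁅f, y⁆⁆ := hinv _ _ _
        _ = 0 := hortho _ h1
    have h2 : (⁅⁅e, ξ⁆, f⁆ : g) = 0 := hBnondeg _ hstep
    have hFEξ : (⁅f, ⁅e, ξ⁆⁆ : g) = 0 := by rw [← lie_skew, h2, neg_zero]
    -- the subspace W
    set W : Submodule K g := LinearMap.ker (F * E) ⊓ V with hWdef
    have hξW : ξ ∈ W := by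
      refine Submodule.mem_inf.mpr ⟨?_, hξV⟩
      rw [LinearMap.mem_ker, Module.End.mul_apply, hEdef, hFdef, ad_apply, ad_apply]
      exact hFEξ
    have hWmap : ∀ w ∈ W, H w ∈ W := by
      intro w hw
      obtain ⟨hw1, hw2⟩ := Submodule.mem_inf.mp hw
      rw [LinearMap.mem_ker] at hw1
      refine Submodule.mem_inf.mpr ⟨?_, ?_⟩
      · rw [LinearMap.mem_ker]
        have hc := congrArg (fun T : Module.End K g => T w) hcomm
        simp only [Module.End.mul_apply] at hc ⊢
        simp only [Module.End.mul_apply] at hw1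
        rw [hc, hw1, map_zero]
      · rw [hV] at hw2 ⊢
        obtain ⟨u', hu'⟩ := hw2
        refine ⟨H u' - (2:K) • u', ?_⟩
        have hc := congrArg (fun T : Module.End K g => T u') hHF
        simp only [Module.End.mul_apply, LinearMap.sub_apply, LinearMap.smul_apply] at hc
        rw [map_sub, map_smul, ← hc, hu']
    -- find an eigenvector of H in W
    haveI : Nontrivial W := Submodule.nontrivial_iff_ne_bot.mpr
      (Submodule.ne_bot_iff W |>.mpr ⟨ξ, hξW, hξ0⟩)
    set HW : Module.End K W := H.restrict hWmap with hHWdef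
    obtain ⟨μ, hμ⟩ := Module.End.exists_eigenvalue HW
    obtain ⟨vw, hvw⟩ := hμ.exists_hasEigenvector
    set v : g := (vw : g) with hvdef
    have hv0 : v ≠ 0 := fun hc => hvw.2 (by
      apply Subtype.ext
      exact hc)
    have hHv : H v = μ • v := by
      have h1 := hvw.apply_eq_smul
      calc H v = ((HW vw : W) : g) := (LinearMap.restrict_coe_apply _ _ _).symm
        _ = ((μ • vw : W) : g) := by rw [h1]
        _ = μ • v := rfl
    have hvW : v ∈ W := vw.2
    obtain ⟨hvker, hvV⟩ := Submodule.mem_inf.mp hvW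
    rw [LinearMap.mem_ker] at hvker
    have hFu : F (E v) = 0 := by
      simpa only [Module.End.mul_apply] using hvker
    by_cases hu : E v = 0
    · -- Case A : `v` is a primitive vector
      have hprim : ht.HasPrimitiveVectorWith v μ := by
        refine ⟨hv0, ?_, ?_⟩
        · rw [show (⁅h, v⁆ : g) = H v from (ad_apply ..).symm, hHv]
        · rw [show (⁅e, v⁆ : g) = E v from (ad_apply ..).symm, hu]
      obtain ⟨n, hn⟩ := hprim.exists_nat
      obtain ⟨k, x, hxk, hFx⟩ := aux_extract H F hcF hHv hv0 (by rw [← hV]; exact hvV)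
      obtain ⟨N, hN1, hlam⟩ := sl2_core E F H hHE hFE hxk hFx hv0 hu
      rw [hn] at hlam
      have hcast : ((n + N + 1 : ℕ) : K) = 0 := by push_cast; linear_combination hlam
      exact absurd (Nat.cast_eq_zero.mp hcast) (by omega)
    · -- Case B : `E v` is a primitive vector for the reversed triple
      have hHu : H (E v) = (μ + 2) • (E v) := by
        have hc := congrArg (fun T : Module.End K g => T v) hHE
        simp only [Module.End.mul_apply, LinearMap.add_apply, LinearMap.smul_apply] at hc
        rw [hc, hHv, map_smul, add_smul]
      have hprim : ht.symm.HasPrimitiveVectorWith (E v) (-(μ + 2)) := by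
        refine ⟨hu, ?_, ?_⟩
        · rw [neg_lie, show (⁅h, E v⁆ : g) = H (E v) from (ad_apply ..).symm, hHu]
          module
        · rw [show (⁅f, E v⁆ : g) = F (E v) from (ad_apply ..).symm, hFu]
      obtain ⟨m, hm⟩ := hprim.exists_nat
      have hHE' : (-H) * F = F * (-H) + (2:K) • F := by
        rw [neg_mul, hHF, mul_neg]
        module
      have hFE' : E * F = F * E - (-H) := by rw [hEF, sub_neg_eq_add]
      have hμeq : μ = -((m : K) + 2) := by linear_combination -hm
      have hx1 : ((((-H) - ((m : K) + 2) • 1 : Module.End K g)) ^ 1) v = 0 := by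
        rw [pow_one]
        simp only [LinearMap.sub_apply, LinearMap.neg_apply, LinearMap.smul_apply,
          Module.End.one_apply]
        rw [hHv, hμeq]
        module
      obtain ⟨N, hN1, hlam⟩ := sl2_core F E (-H) hHE' hFE' hx1 rfl hu hFu
      have hcast : ((m + N + 1 : ℕ) : K) = 0 := by push_cast; linear_combination hlam
      exact absurd (Nat.cast_eq_zero.mp hcast) (by omega)
end
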